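/- For positive integers p, m, n and complex s with Re(s) > 0, (Γ(s+p)/(p−1)!) · ∫₀¹ x^{p−1} (mx+n)^{−(p+s)} dx = Γ(s)/(m^p n^s) − ∑_{r=0}^{p−1} (1/r!) · Γ(s+r)/(m^{p−r}(m+n)^{s+r}). -/

import Mathlib

open Complex Real MeasureTheory Finset intervalIntegral

lemma hgi_integrable (a b : ℝ) (ha : 0 ≤ a) (hb : 0 < b) (k : ℕ) (c : ℂ) :
    IntervalIntegrable (fun x : ℝ => (x:ℂ)^k * ((a:ℂ)*x+(b:ℂ))^c) volume 0 1 := by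
  apply ContinuousOn.intervalIntegrable
  apply ContinuousOn.mul
  · exact (Complex.continuous_ofReal.pow k).continuousOn
  · intro x hx
    rw [Set.uIcc_of_le zero_le_one] at hx
    have hpos : 0 < a * x + b := by nlinarith [hx.1, hx.2]
    have hslit : ((a:ℂ)*x+(b:ℂ)) ∈ Complex.slitPlane := by
      refine Or.inl ?_
      have : ((a:ℂ)*x+(b:ℂ)) = ((a*x+b : ℝ) : ℂ) := by push_cast; ring
      rw [this, Complex.ofReal_re]; exact hpos
    have hf : ContinuousAt (fun x : ℝ => (a:ℂ)*x+(b:ℂ)) x := by fun_prop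
    exact (hf.cpow continuousAt_const hslit).continuousWithinAt

lemma hgi_ftc (a b : ℝ) (ha : 0 < a) (hb : 0 < b) (k : ℕ) (c : ℂ) :
    ((k:ℂ) * ∫ x in (0:ℝ)..1, (x:ℂ)^(k-1) * ((a:ℂ)*x+(b:ℂ))^c)
      + ((a:ℂ) * c) * ∫ x in (0:ℝ)..1, (x:ℂ)^k * ((a:ℂ)*x+(b:ℂ))^(c-1)
      = ((a:ℂ)+(b:ℂ))^c - (0:ℂ)^k * (b:ℂ)^c := by
  have hderiv : ∀ x ∈ Set.uIcc (0:ℝ) 1,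
      HasDerivAt (fun x : ℝ => (x:ℂ)^k * ((a:ℂ)*x+(b:ℂ))^c)
        ((k:ℂ) * ((x:ℂ)^(k-1) * ((a:ℂ)*x+(b:ℂ))^c)
          + ((a:ℂ)*c) * ((x:ℂ)^k * ((a:ℂ)*x+(b:ℂ))^(c-1))) x := by
    intro x hx
    rw [Set.uIcc_of_le zero_le_one] at hx
    have hpos : 0 < a * x + b := by nlinarith [hx.1, hx.2]
    have hslit : ((a:ℂ)*x+(b:ℂ)) ∈ Complex.slitPlane := by
      refine Or.inl ?_
      have : ((a:ℂ)*x+(b:ℂ)) = ((a*x+b : ℝ) : ℂ) := by push_cast; ring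
      rw [this, Complex.ofReal_re]; exact hpos
    have hre : HasDerivAt (fun x : ℝ => (x:ℂ)) 1 x := Complex.ofRealCLM.hasDerivAt
    have h1 : HasDerivAt (fun x : ℝ => (x:ℂ)^k) ((k:ℂ) * (x:ℂ)^(k-1)) x :=
      (hasDerivAt_pow k (x:ℂ)).comp_ofReal
    have h2 : HasDerivAt (fun z : ℂ => (a:ℂ)*z+(b:ℂ)) (a:ℂ) (x:ℂ) := by
      simpa using ((hasDerivAt_id (x:ℂ)).const_mul (a:ℂ)).add_const (b:ℂ)
    have h3 : HasDerivAt (fun x : ℝ => ((a:ℂ)*x+(b:ℂ))^c)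
        (c * ((a:ℂ)*x+(b:ℂ))^(c-1) * (a:ℂ)) x :=
      (HasDerivAt.cpow_const (f := fun z : ℂ => (a:ℂ)*z+(b:ℂ)) h2 hslit).comp_ofReal
    have h4 := h1.mul h3
    convert h4 using 1
    case e'_4 => rfl
    case e'_8 => rfl
    ring
  have hint : IntervalIntegrable (fun x : ℝ =>
      (k:ℂ) * ((x:ℂ)^(k-1) * ((a:ℂ)*x+(b:ℂ))^c)
        + ((a:ℂ)*c) * ((x:ℂ)^k * ((a:ℂ)*x+(b:ℂ))^(c-1))) volume 0 1 :=
    ((hgi_integrable a b ha.le hb (k-1) c).const_mul _).add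
      ((hgi_integrable a b ha.le hb k (c-1)).const_mul _)
  have := intervalIntegral.integral_eq_sub_of_hasDerivAt hderiv hint
  rw [intervalIntegral.integral_add ((hgi_integrable a b ha.le hb (k-1) c).const_mul _)
    ((hgi_integrable a b ha.le hb k (c-1)).const_mul _),
    intervalIntegral.integral_const_mul, intervalIntegral.integral_const_mul] at this
  rw [this]
  push_cast
  ring_nf

set_option maxHeartbeats 1000000 in
theorem hypergeometric_integral_identity (p m n : ℕ) (hp : 0 < p) (hm : 0 < m)
    (hn : 0 < n) (s : ℂ) (hs : 0 < s.re) :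
    (Complex.Gamma (s + p) / (Nat.factorial (p - 1) : ℂ)) *
        ∫ x in (0:ℝ)..1,
          (x : ℂ) ^ (p - 1) * (((m : ℝ) * x + n : ℝ) : ℂ) ^ (-((p : ℂ) + s)) =
      Complex.Gamma s / ((m : ℂ) ^ p * (n : ℂ) ^ s) -
        ∑ r ∈ Finset.range p,
          (1 / (Nat.factorial r : ℂ)) *
            (Complex.Gamma (s + r) /
              ((m : ℂ) ^ (p - r) * ((m : ℂ) + (n : ℂ)) ^ (s + r))) := by
  have hm' : (0:ℝ) < (m:ℝ) := by exact_mod_cast hm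
  have hn' : (0:ℝ) < (n:ℝ) := by exact_mod_cast hn
  have hm0 : (m:ℂ) ≠ 0 := Nat.cast_ne_zero.mpr hm.ne'
  have hn0 : (n:ℂ) ≠ 0 := Nat.cast_ne_zero.mpr hn.ne'
  have hmn0 : (m:ℂ) + (n:ℂ) ≠ 0 := by
    have : ((m+n:ℕ):ℂ) ≠ 0 := Nat.cast_ne_zero.mpr (by omega)
    push_cast at this; exact this
  have hns : (n:ℂ) ^ s ≠ 0 := fun h => by
    rw [Complex.cpow_eq_zero_iff] at h; exact hn0 h.1
  have hs0 : s ≠ 0 := fun h => by simp [h] at hs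
  simp only [show ∀ x:ℝ, (((m:ℝ)*x+(n:ℝ) : ℝ):ℂ) = ((m:ℂ)*(x:ℂ)+(n:ℂ)) from
    fun x => by push_cast; ring]
  have hB : ∀ w : ℂ, ((m:ℂ)+(n:ℂ)) ^ w ≠ 0 := fun w h => by
    rw [Complex.cpow_eq_zero_iff] at h; exact hmn0 h.1
  induction p, hp using Nat.le_induction with
  | base =>
    have h := hgi_ftc (m:ℝ) (n:ℝ) hm' hn' 0 (-s)
    push_cast at h
    simp only [pow_zero, zero_mul, zero_add, one_mul] at h
    rw [Complex.cpow_neg, Complex.cpow_neg] at h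
    have hJ : (∫ x in (0:ℝ)..1, ((m:ℂ)*(x:ℂ)+(n:ℂ))^(-s-1))
        = ((((m:ℂ)+(n:ℂ))^s)⁻¹ - ((n:ℂ)^s)⁻¹) / ((m:ℂ) * -s) := by
      rw [eq_div_iff (mul_ne_zero hm0 (neg_ne_zero.mpr hs0))]
      linear_combination h
    simp only [Nat.cast_one, show (1-1:ℕ) = 0 from rfl, pow_zero, one_mul,
      Nat.factorial_zero, Finset.sum_range_one, Nat.cast_zero, add_zero,
      Nat.sub_zero, pow_one, div_one]
    simp only [show -((1:ℂ)+s) = -s-1 from by ring]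
    rw [hJ, Complex.Gamma_add_one s hs0]
    have hmns := hB s
    field_simp
    ring
  | succ p hp1 IH =>
    have hre : 0 < (s + (p:ℂ)).re := by
      simp only [Complex.add_re, Complex.natCast_re]
      positivity
    have hsp : s + (p:ℂ) ≠ 0 := fun h => by rw [h] at hre; simp at hre
    have hGp : Complex.Gamma (s + (p:ℂ)) ≠ 0 := Complex.Gamma_ne_zero_of_re_pos hre
    have hpc0 : ((p:ℕ):ℂ) ≠ 0 := Nat.cast_ne_zero.mpr (by omega : p ≠ 0)
    have hF1 : ((Nat.factorial (p-1) : ℕ):ℂ) ≠ 0 :=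
      Nat.cast_ne_zero.mpr (Nat.factorial_ne_zero _)
    have hfac : ((Nat.factorial p : ℕ):ℂ) = (p:ℂ) * ((Nat.factorial (p-1):ℕ):ℂ) := by
      exact_mod_cast congrArg (Nat.cast : ℕ → ℂ) (Nat.mul_factorial_pred (by omega : p ≠ 0)).symm
    have h := hgi_ftc (m:ℝ) (n:ℝ) hm' hn' p (-((p:ℂ)+s))
    push_cast at h
    rw [zero_pow (by omega : p ≠ 0)] at h
    simp only [zero_mul, sub_zero] at h
    rw [show ((m:ℂ)+(n:ℂ))^(-((p:ℂ)+s)) = (((m:ℂ)+(n:ℂ))^(s+(p:ℂ)))⁻¹ by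
      rw [Complex.cpow_neg, add_comm ((p:ℂ)) s]] at h
    simp only [Nat.add_sub_cancel]
    push_cast
    simp only [show ∀ x:ℝ, ((m:ℂ)*(x:ℂ)+(n:ℂ))^(-(((p:ℂ)+1)+s))
        = ((m:ℂ)*(x:ℂ)+(n:ℂ))^(-((p:ℂ)+s)-1) from fun x => by
      rw [show -(((p:ℂ)+1)+s) = -((p:ℂ)+s)-1 from by ring]]
    rw [Finset.sum_range_succ]
    simp only [show p+1-p = 1 from by omega, pow_one]
    have hsum : ∑ r ∈ Finset.range p, (1/((Nat.factorial r:ℕ):ℂ)) *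
          (Complex.Gamma (s+(r:ℂ)) / ((m:ℂ)^(p+1-r) * ((m:ℂ)+(n:ℂ))^(s+(r:ℂ))))
        = ((m:ℂ))⁻¹ * ∑ r ∈ Finset.range p, (1/((Nat.factorial r:ℕ):ℂ)) *
          (Complex.Gamma (s+(r:ℂ)) / ((m:ℂ)^(p-r) * ((m:ℂ)+(n:ℂ))^(s+(r:ℂ)))) := by
      rw [Finset.mul_sum]
      refine Finset.sum_congr rfl fun r hr => ?_
      have hr' := Finset.mem_range.mp hr
      rw [show p+1-r = (p-r)+1 from by omega, pow_succ]
      field_simp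
    rw [hsum]
    rw [show s + ((p:ℂ)+1) = (s+(p:ℂ)) + 1 from by ring, Complex.Gamma_add_one _ hsp]
    set I := ∫ x in (0:ℝ)..1, (x:ℂ)^(p-1) * ((m:ℂ)*(x:ℂ)+(n:ℂ))^(-((p:ℂ)+s)) with hIdef
    set I' := ∫ x in (0:ℝ)..1, (x:ℂ)^p * ((m:ℂ)*(x:ℂ)+(n:ℂ))^(-((p:ℂ)+s)-1) with hI'def
    set S := ∑ r ∈ Finset.range p, (1/((Nat.factorial r:ℕ):ℂ)) *
      (Complex.Gamma (s+(r:ℂ)) / ((m:ℂ)^(p-r) * ((m:ℂ)+(n:ℂ))^(s+(r:ℂ)))) with hSdef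
    have hI' : I' = ((p:ℂ)*I - (((m:ℂ)+(n:ℂ))^(s+(p:ℂ)))⁻¹)/((m:ℂ)*(s+(p:ℂ))) := by
      rw [eq_div_iff (mul_ne_zero hm0 hsp)]
      linear_combination -h
    rw [div_mul_eq_mul_div, div_eq_iff hF1] at IH
    have hI : I = ((Nat.factorial (p-1):ℕ):ℂ) *
        (Complex.Gamma s/((m:ℂ)^p * (n:ℂ)^s) - S) / Complex.Gamma (s+(p:ℂ)) := by
      rw [eq_div_iff hGp]
      linear_combination IH
    have hBp := hB (s+(p:ℂ))
    have hmp : (m:ℂ)^p ≠ 0 := pow_ne_zero _ hm0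
    set G := Complex.Gamma (s + (p:ℂ)) with hGdef
    set B' := ((m:ℂ)+(n:ℂ))^(s+(p:ℂ)) with hB'def
    rw [hI', hI, hfac]
    have step1 : (s+(p:ℂ))*G/((p:ℂ)*((Nat.factorial (p-1):ℕ):ℂ)) *
          (((p:ℂ)*(((Nat.factorial (p-1):ℕ):ℂ) *
            (Complex.Gamma s/((m:ℂ)^p * (n:ℂ)^s) - S) / G) - B'⁻¹)/((m:ℂ)*(s+(p:ℂ))))
        = (Complex.Gamma s/((m:ℂ)^p * (n:ℂ)^s) - S)/(m:ℂ)
            - 1/((p:ℂ)*((Nat.factorial (p-1):ℕ):ℂ)) * (G/((m:ℂ)*B')) := by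
      generalize (Complex.Gamma s/((m:ℂ)^p * (n:ℂ)^s) - S) = R
      field_simp
    have step2 : (Complex.Gamma s/((m:ℂ)^p * (n:ℂ)^s) - S)/(m:ℂ)
        = Complex.Gamma s/((m:ℂ)^(p+1) * (n:ℂ)^s) - ((m:ℂ))⁻¹*S := by
      rw [pow_succ]
      field_simp
    rw [step1, step2]
    ring
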